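/- Let R > 1 and R^{-1/3} ≤ σ ≤ 1. Suppose w ∈ ℝ³ satisfies |w₁| ≤ R^{-1/3}σ², |w₂ - 2c w₁| ≤ R^{-2/3} and |w₃ - 3c w₂ + 3c² w₁| ≤ R^{-1} for some c (i.e. w lies in θ̃_c and has first coordinate of size at most R^{-1/3}σ²). Then |w₂ - 2c w₁| ≤ 7 R^{-2/3}σ, i.e. w lies in 7·Θ(σ,c), where Θ(σ,c) = {w : |w₁| ≤ R^{-1/3}σ², |w₂-2cw₁| ≤ R^{-2/3}σ, |w₃-3cw₂+3c²w₁| ≤ R^{-1}}, provided additionally that w can be written as w = (x, y+2x(s-c), z+3y(s-c)+3x(s-c)²) with (x,y,z) ∈ Θ(σ,0) and s ∈ [0,1]. -/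
import Mathlib


/-- If `(x,y,z) ∈ Θ(σ,0)`, `s ∈ [0,1]`, and the point `C_{(x,y,z)}(s)` lies in the plank
`θ̃_c`, then its middle coordinate satisfies `|y + 2x(s-c)| ≤ 7 R^{-2/3} σ`, i.e. the point
lies in `7·Θ(σ,c)`. -/
theorem stmt_1 (R σ c s x y z : ℝ) (hR : 1 < R)
    (hσ₁ : R ^ (-(1/3) : ℝ) ≤ σ) (hσ₂ : σ ≤ 1)
    (hs₀ : 0 ≤ s) (hs₁ : s ≤ 1)
    -- (x,y,z) ∈ Θ(σ,0)
    (hx : |x| ≤ R ^ (-(1/3) : ℝ) * σ^2)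
    (hy : |y| ≤ R ^ (-(2/3) : ℝ) * σ)
    (hz : |z| ≤ R ^ (-1 : ℝ))
    -- C_{(x,y,z)}(s) ∈ θ̃_c
    (h1 : |x| ≤ R ^ (-(1/3) : ℝ))
    (h2 : |y + 2*x*(s - c)| ≤ R ^ (-(2/3) : ℝ))
    (h3 : |z + 3*y*(s - c) + 3*x*(s - c)^2| ≤ R ^ (-1 : ℝ)) :
    |y + 2*x*(s - c)| ≤ 7 * R ^ (-(2/3) : ℝ) * σ := by
  have hR0 : (0:ℝ) < R := by linarith
  set A := R ^ (-(1/3) : ℝ) with hA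
  have hApos : 0 < A := Real.rpow_pos_of_pos hR0 _
  have hA2 : R ^ (-(2/3) : ℝ) = A^2 := by
    rw [hA, ← Real.rpow_natCast (R ^ (-(1/3):ℝ)) 2, ← Real.rpow_mul hR0.le]
    norm_num
  have hA3 : R ^ (-1 : ℝ) = A^3 := by
    rw [hA, ← Real.rpow_natCast (R ^ (-(1/3):ℝ)) 3, ← Real.rpow_mul hR0.le]
    norm_num
  rw [hA2] at hy ⊢
  rw [hA3] at hz h3
  have hσpos : 0 < σ := lt_of_lt_of_le hApos hσ₁
  set t := s - c with ht
  clear_value t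
  have hAσ : 0 < A^2*σ := by positivity
  have h4 : |y*t + x*t^2| ≤ (2/3)*A^3 := by
    obtain ⟨h3a, h3b⟩ := abs_le.mp h3
    obtain ⟨hza, hzb⟩ := abs_le.mp hz
    rw [abs_le]
    constructor <;> linarith
  rcases le_or_gt (|t| * σ) A with hcase | hcase
  · -- small |t|
    have habs : |y + 2*x*t| ≤ |y| + 2*(|x| * |t|) := by
      calc |y + 2*x*t| ≤ |y| + |2*x*t| := abs_add_le _ _
        _ = |y| + 2*(|x| * |t|) := by rw [abs_mul, abs_mul, abs_two]; ring
    have h5 : |x| * |t| ≤ (A*σ^2) * |t| :=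
      mul_le_mul_of_nonneg_right hx (abs_nonneg t)
    have h6 : (A*σ)*(|t| * σ) ≤ (A*σ)*A :=
      mul_le_mul_of_nonneg_left hcase (by positivity)
    nlinarith [abs_nonneg t]
  · -- large |t|
    have htpos : 0 < |t| := by nlinarith [abs_nonneg t]
    have hxtt : |x*t^2| ≤ (2/3)*A^3 + A^2*σ * |t| := by
      have e2 : x*t^2 = (y*t + x*t^2) - y*t := by ring
      have hyt : |y*t| ≤ A^2*σ * |t| := by
        rw [abs_mul]
        exact mul_le_mul_of_nonneg_right hy (abs_nonneg t)
      calc |x*t^2| = |(y*t + x*t^2) - y*t| := congrArg abs e2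
        _ ≤ |y*t + x*t^2| + |y*t| := abs_sub _ _
        _ ≤ (2/3)*A^3 + A^2*σ * |t| := add_le_add h4 hyt
    have habs2 : |y + 2*x*t| * |t| ≤ (4/3)*A^3 + A^2*σ * |t| := by
      have e : (y + 2*x*t)*t = (y*t + x*t^2) + x*t^2 := by ring
      calc |y + 2*x*t| * |t| = |(y + 2*x*t)*t| := (abs_mul _ _).symm
        _ = |(y*t + x*t^2) + x*t^2| := by rw [e]
        _ ≤ |y*t + x*t^2| + |x*t^2| := abs_add_le _ _
        _ ≤ (2/3)*A^3 + ((2/3)*A^3 + A^2*σ * |t|) := add_le_add h4 hxtt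
        _ = (4/3)*A^3 + A^2*σ * |t| := by ring
    have hfin : |y + 2*x*t| * |t| ≤ ((7/3)*A^2*σ) * |t| := by
      have h7 : A^2*A < A^2*(|t| * σ) :=
        mul_lt_mul_of_pos_left hcase (by positivity)
      linarith
    have := le_of_mul_le_mul_right hfin htpos
    linarith
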